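/- Let t be a real number with ‖10^i t‖ ≥ 1/(2q) for all integers 0 ≤ i ≤ k, where q ≥ 1. Then for any interval I ⊆ [0, k] of length at least log q / log 10 + 1, there exists an integer i ∈ I with ‖10^i t‖ > 1/200. -/

import Mathlib

noncomputable def nint (θ : ℝ) : ℝ := ⨅ m : ℤ, |θ - (m : ℝ)|

lemma nint_bdd (θ : ℝ) : BddBelow (Set.range fun m : ℤ => |θ - (m : ℝ)|) :=
  ⟨0, by rintro x ⟨m, rfl⟩; positivity⟩

lemma nint_le (θ : ℝ) (m : ℤ) : nint θ ≤ |θ - (m : ℝ)| := ciInf_le (nint_bdd θ) m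

lemma nint_eq (θ : ℝ) : nint θ = |θ - (round θ : ℝ)| := by
  refine le_antisymm (nint_le θ _) (le_ciInf fun m => ?_)
  rcases eq_or_ne m (round θ) with rfl | hm
  · exact le_rfl
  · have h1 : (1 : ℝ) ≤ |(m : ℝ) - (round θ : ℝ)| := by
      have : m - round θ ≠ 0 := sub_ne_zero.mpr hm
      calc (1:ℝ) = ((1:ℤ):ℝ) := by norm_num
        _ ≤ |((m - round θ : ℤ) : ℝ)| := by
            exact_mod_cast Int.one_le_abs (by exact_mod_cast this)
        _ = |(m:ℝ) - (round θ : ℝ)| := by push_cast; ring_nf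
    have h2 := abs_sub_round θ
    have := abs_sub_abs_le_abs_sub ((m:ℝ) - round θ) (θ - round θ)
    have h3 : |(m:ℝ) - round θ| - |θ - (round θ:ℝ)| ≤ |θ - m| := by
      calc |(m:ℝ) - round θ| - |θ - (round θ:ℝ)| ≤ |((m:ℝ) - round θ) - (θ - round θ)| :=
            abs_sub_abs_le_abs_sub _ _
        _ = |θ - m| := by rw [← abs_neg]; ring_nf
    linarith

lemma nint_nonneg (θ : ℝ) : 0 ≤ nint θ := by rw [nint_eq]; positivity

lemma nint_le_half (θ : ℝ) : nint θ ≤ 1 / 2 := by rw [nint_eq]; exact abs_sub_round θ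

lemma nint_ten (x : ℝ) (hx : nint x ≤ 1 / 200) : nint (10 * x) = 10 * nint x := by
  rw [nint_eq] at hx ⊢
  set m := round x with hm
  have hd : |x - (m:ℝ)| ≤ 1/200 := hx
  have hr : round (10 * x) = 10 * m := by
    have : 10 * x = ((10 * m : ℤ) : ℝ) + 10 * (x - m) := by push_cast; ring
    rw [this, round_intCast_add]
    have : round (10 * (x - (m:ℝ))) = 0 := by
      rw [round_eq_zero_iff]
      constructor
      · nlinarith [abs_le.mp hd]
      · nlinarith [abs_le.mp hd]
    omega
  rw [nint_eq, hr]
  push_cast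
  rw [show 10 * x - (10 * (m:ℝ)) = 10 * (x - m) by ring, abs_mul]
  norm_num
  rw [← hm]

theorem stmt_4 (t q : ℝ) (hq : 1 ≤ q) (k : ℕ)
    (h : ∀ i ≤ k, 1 / (2 * q) ≤ nint (10^i * t))
    (a b : ℕ) (hab : a ≤ b) (hbk : b ≤ k)
    (hlen : Real.log q / Real.log 10 + 1 ≤ (b : ℝ) - (a : ℝ)) :
    ∃ i : ℕ, a ≤ i ∧ i ≤ b ∧ 1 / 200 < nint (10^i * t) := by
  by_contra hcon
  push_neg at hcon
  have hc : ∀ i, a ≤ i → i ≤ b → nint (10^i * t) ≤ 1/200 := fun i h1 h2 => hcon i h1 h2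
  have key : ∀ j, j ≤ b - a → nint (10^(a+j) * t) = 10^j * nint (10^a * t) := by
    intro j hj
    induction j with
    | zero => simp
    | succ n ih =>
      have hn : n ≤ b - a := Nat.le_of_succ_le hj
      have hle : nint (10^(a+n) * t) ≤ 1/200 := hc (a+n) (Nat.le_add_right _ _) (by omega)
      have h10 := nint_ten (10^(a+n) * t) hle
      have e : (10:ℝ)^(a+(n+1)) * t = 10 * (10^(a+n) * t) := by ring
      rw [e, h10, ih hn]; ring
  set n := b - a with hn
  have hab' : a + n = b := by omega
  have h1 := key n le_rfl
  rw [hab'] at h1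
  have h2 : nint (10^b * t) ≤ 1/200 := hc b hab le_rfl
  have h3 : 1 / (2*q) ≤ nint (10^a * t) := h a (le_trans hab hbk)
  have hq0 : (0:ℝ) < q := lt_of_lt_of_le one_pos hq
  have hlog10 : 0 < Real.log 10 := Real.log_pos (by norm_num)
  have hcast : (n:ℝ) = (b:ℝ) - (a:ℝ) := by
    rw [hn, Nat.cast_sub hab]
  have hn1 : Real.log q ≤ ((n:ℝ) - 1) * Real.log 10 := by
    have hd : Real.log q / Real.log 10 ≤ (n:ℝ) - 1 := by rw [hcast]; linarith
    calc Real.log q = Real.log q / Real.log 10 * Real.log 10 := by field_simp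
      _ ≤ ((n:ℝ) - 1) * Real.log 10 := by
          exact mul_le_mul_of_nonneg_right hd hlog10.le
  have hpow : 10 * q ≤ (10:ℝ)^n := by
    have hqe : q ≤ Real.exp (((n:ℝ)-1) * Real.log 10) := by
      calc q = Real.exp (Real.log q) := (Real.exp_log hq0).symm
        _ ≤ _ := Real.exp_le_exp.mpr hn1
    have he : Real.exp (((n:ℝ)-1) * Real.log 10) = (10:ℝ)^((n:ℝ)-1) := by
      rw [Real.rpow_def_of_pos (by norm_num : (0:ℝ) < 10), mul_comm]
    have h2' : 10 * q ≤ 10 * (10:ℝ)^((n:ℝ)-1) := by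
      rw [← he]; linarith
    calc 10 * q ≤ 10 * (10:ℝ)^((n:ℝ)-1) := h2'
      _ = (10:ℝ)^((n:ℝ)-1+1) := by
          rw [Real.rpow_add (by norm_num : (0:ℝ) < 10)]; norm_num; ring
      _ = (10:ℝ)^(n:ℝ) := by norm_num
      _ = (10:ℝ)^n := Real.rpow_natCast 10 n
  have h5 : (5:ℝ) ≤ (10:ℝ)^n * (1/(2*q)) := by
    have hpos : (0:ℝ) < 1/(2*q) := by positivity
    have := mul_le_mul_of_nonneg_right hpow hpos.le
    have heq : (10*q) * (1/(2*q)) = 5 := by field_simp; ring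
    linarith
  have h6 : (10:ℝ)^n * (1/(2*q)) ≤ (10:ℝ)^n * nint (10^a * t) :=
    mul_le_mul_of_nonneg_left h3 (by positivity)
  linarith [h1, h2]
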